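/- Let α, β > 0 with α + β < 1. Then for every energy e > 0, every point (x,y) ∈ ℝ², and every direction angle φ, the electromagnetic curvature of the toy model is strictly positive: K_e((x,y), φ) > 0. -/

import Mathlib

/-- Electromagnetic curvature of the planar toy model (potential `V = −αx²−βy²`,
magnetic field `σ = 2 dx∧dy`) at energy `e`, at the point `(x,y)` in the
unit direction `(cos φ, sin φ)`. -/
noncomputable def emCurv (α β e x y φ : ℝ) : ℝ :=
  (2 - α - β) / (2*(e + α*x^2 + β*y^2)^2)
    + (α^2*x^2 + β^2*y^2) / (e + α*x^2 + β*y^2)^3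
    - Real.sqrt 2 * (α*x*Real.sin φ - β*y*Real.cos φ) /
        (e + α*x^2 + β*y^2) ^ ((5:ℝ)/2)

/-- If `α + β < 1`, the electromagnetic curvature of the toy model is
everywhere strictly positive, at every energy and in every direction. -/
theorem stmt_13 (α β : ℝ) (hα : 0 < α) (hβ : 0 < β) (h : α + β < 1) :
    ∀ e : ℝ, 0 < e → ∀ x y φ : ℝ, 0 < emCurv α β e x y φ := by
  intro e he x y φ
  have hE : (0:ℝ) < e + α*x^2 + β*y^2 := by positivity
  set S := Real.sqrt (e + α*x^2 + β*y^2) with hSdef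
  have hS : 0 < S := Real.sqrt_pos.mpr hE
  have hS2 : S^2 = e + α*x^2 + β*y^2 := Real.sq_sqrt hE.le
  have hrpow : (e + α*x^2 + β*y^2) ^ ((5:ℝ)/2) = S^5 := by
    rw [show ((5:ℝ)/2) = (1/2 : ℝ) * (5:ℕ) by norm_num,
      Real.rpow_mul hE.le, Real.rpow_natCast, ← Real.sqrt_eq_rpow]
  have hsc : Real.sin φ ^ 2 + Real.cos φ ^ 2 = 1 := Real.sin_sq_add_cos_sq φ
  have h2 : Real.sqrt 2 ^ 2 = 2 := Real.sq_sqrt (by norm_num)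
  have key : emCurv α β e x y φ =
      ((1 - α - β)*S^2 + (Real.sqrt 2*α*x - S*Real.sin φ)^2
        + (Real.sqrt 2*β*y + S*Real.cos φ)^2) / (2*S^6) := by
    unfold emCurv
    rw [hrpow, ← hS2]
    field_simp
    linear_combination (-S^2)*hsc + (-(α^2*x^2+β^2*y^2))*h2
  rw [key]
  have hnum : 0 < (1 - α - β)*S^2 + (Real.sqrt 2*α*x - S*Real.sin φ)^2
      + (Real.sqrt 2*β*y + S*Real.cos φ)^2 := by
    have : 0 < (1 - α - β)*S^2 := by nlinarith
    positivity
  positivity
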